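/- Let φ(x,t) = t^p + a(x) t^q with 1 < p < q < ∞ and a a nonnegative function in C^{0,α}(ℝⁿ) for some α ∈ (0,1]. Then for every compact subset E of an open set O ⊆ ℝⁿ, the infimal φ-capacity is bounded above by the variational p-capacity: cap_φ^inf(E;O) ≤ cap_p(E;O). -/

import Mathlib

open MeasureTheory Metric Set

noncomputable section

/-- Euclidean space `ℝⁿ`. -/
abbrev En (n : ℕ) : Type := EuclideanSpace ℝ (Fin n)

/-- Norm of the (a.e. defined, by Rademacher's theorem) gradient of `u` at `x`. -/
def gnorm {n : ℕ} (u : En n → ℝ) (x : En n) : ℝ := ‖fderiv ℝ u x‖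

/-- Admissible test functions for the level-`t` capacity of `E` in `O`:
Lipschitz on the closure of `O`, `u ≥ t` on `E`, `u = 0` on `∂O`. -/
def Adm {n : ℕ} (E O : Set (En n)) (t : ℝ) : Set (En n → ℝ) :=
  {u | (∃ K, LipschitzOnWith K u (closure O)) ∧ (∀ x ∈ E, t ≤ u x) ∧
    ∀ x ∈ frontier O, u x = 0}

/-- Level-`t` variational capacity with integrand `ψ` and normalization `ψm`. -/
def capLevel {n : ℕ} (ψ : En n → ℝ → ℝ) (ψm : ℝ → ℝ)
    (E O : Set (En n)) (t : ℝ) : ℝ :=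
  sInf ((fun u => ∫ x in O, ψ x (gnorm u x) / ψm t) '' Adm E O t)

/-- Infimal capacity with integrand `ψ` and normalization `ψm`. -/
def capInfGen {n : ℕ} (ψ : En n → ℝ → ℝ) (ψm : ℝ → ℝ) (E O : Set (En n)) : ℝ :=
  ⨅ t : Ioi (0 : ℝ), capLevel ψ ψm E O (t : ℝ)

/-- The double-phase integrand `φ(x,t) = t^p + a(x) t^q`. -/
def phi {n : ℕ} (a : En n → ℝ) (p q : ℝ) (x : En n) (t : ℝ) : ℝ :=
  t ^ p + a x * t ^ q

/-- `a_O^- = inf_{x ∈ O} a(x)`. -/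
def aInfOn {n : ℕ} (a : En n → ℝ) (O : Set (En n)) : ℝ := sInf (a '' O)

/-- `a_O^+ = sup_{x ∈ O} a(x)`. -/
def aSupOn {n : ℕ} (a : En n → ℝ) (O : Set (En n)) : ℝ := sSup (a '' O)

/-- `φ_O^-(t) = t^p + a_O^- t^q`. -/
def phiMinus {n : ℕ} (a : En n → ℝ) (p q : ℝ) (O : Set (En n)) (t : ℝ) : ℝ :=
  t ^ p + aInfOn a O * t ^ q

/-- Level-`t` variational capacity for the double-phase integrand. -/
def capPhiLevel {n : ℕ} (a : En n → ℝ) (p q t : ℝ) (E O : Set (En n)) : ℝ :=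
  capLevel (phi a p q) (phiMinus a p q O) E O t

/-- Infimal `φ`-capacity. -/
def capPhiInf {n : ℕ} (a : En n → ℝ) (p q : ℝ) (E O : Set (En n)) : ℝ :=
  ⨅ t : Ioi (0 : ℝ), capPhiLevel a p q (t : ℝ) E O

/-- Variational `p`-capacity. -/
def capP {n : ℕ} (p : ℝ) (E O : Set (En n)) : ℝ :=
  sInf ((fun u => ∫ x in O, gnorm u x ^ p) '' Adm E O 1)

/-- The rescaled set `{x ∈ B̄(0,1/2) : z + r x ∈ E}`. -/
def shiftedSet {n : ℕ} (E : Set (En n)) (z : En n) (r : ℝ) : Set (En n) :=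
  {x ∈ closedBall (0 : En n) (1 / 2) | z + r • x ∈ E}

/-- Local uniform infimal `φ`-fatness with parameters `cfat` and `ro`. -/
def LocUnifPhiFat {n : ℕ} (a : En n → ℝ) (p q : ℝ) (E : Set (En n))
    (cfat ro : ℝ) : Prop :=
  ∀ z ∈ E, ∀ r : ℝ, 0 < r → r < ro →
    cfat ≤ capPhiInf (fun x => a (z + r • x)) p q (shiftedSet E z r) (ball (0 : En n) 1)

/-- Local uniform `p`-fatness with parameters `cfat` and `ro`. -/
def LocUnifPFat {n : ℕ} (p : ℝ) (E : Set (En n)) (cfat ro : ℝ) : Prop :=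
  ∀ z ∈ E, ∀ r : ℝ, 0 < r → r < ro →
    cfat ≤ capP p (shiftedSet E z r) (ball (0 : En n) 1)

/-- `Lip_0(Ω)`: Lipschitz functions with compact support contained in `Ω`,
extended by zero to `ℝⁿ`. -/
def Lip0 {n : ℕ} (Ω : Set (En n)) : Set (En n → ℝ) :=
  {u | (∃ K, LipschitzWith K u) ∧ HasCompactSupport u ∧ tsupport u ⊆ Ω}

/-- Restricted centered maximal operator `M_R f(x) = sup_{0<r<R} ⨍_{B(x,r)} |f|`. -/
def maxOp {n : ℕ} (R : ℝ) (f : En n → ℝ) (x : En n) : ℝ :=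
  ⨆ r : Ioo (0 : ℝ) R, ⨍ y in ball x (r : ℝ), |f y|


private lemma mul_mem_Adm' {n : ℕ} {E O : Set (En n)} {u : En n → ℝ} {s : ℝ} (t : ℝ) (ht : 0 < t)
    (hu : u ∈ Adm E O s) : (fun x => t * u x) ∈ Adm E O (t * s) := by
  obtain ⟨⟨K, hK⟩, hEs, hF⟩ := hu
  refine ⟨⟨t.toNNReal * K, ?_⟩, fun x hx => ?_, fun x hx => by simp [hF x hx]⟩
  · apply LipschitzOnWith.of_dist_le_mul
    intro x hx y hy
    have := hK.dist_le_mul x hx y hy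
    rw [Real.dist_eq] at this ⊢
    calc |t * u x - t * u y| = t * |u x - u y| := by
          rw [← mul_sub, abs_mul, abs_of_pos ht]
      _ ≤ t * (K * dist x y) := by nlinarith [abs_nonneg (u x - u y)]
      _ = ↑(t.toNNReal * K) * dist x y := by
          push_cast
          rw [Real.coe_toNNReal _ ht.le]; ring
  · have := hEs x hx
    show t * s ≤ t * u x
    nlinarith

private lemma gnorm_const_mul' {n : ℕ} (u : En n → ℝ) {t : ℝ} (ht : t ≠ 0) (x : En n) :
    gnorm (fun y => t * u y) x = |t| * gnorm u x := by
  by_cases h : DifferentiableAt ℝ u x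
  · rw [gnorm, gnorm, fderiv_const_mul h, norm_smul, Real.norm_eq_abs]
  · have h2 : ¬ DifferentiableAt ℝ (fun y => t * u y) x := by
      intro h2
      have h3 := h2.const_mul t⁻¹
      simp only [← mul_assoc, inv_mul_cancel₀ ht, one_mul] at h3
      exact h h3
    rw [gnorm, gnorm, fderiv_zero_of_not_differentiableAt h,
        fderiv_zero_of_not_differentiableAt h2]
    simp

/-- **Upper bound for the infimal capacity** (Lemma 2.2):
`cap_φ^inf(E;O) ≤ cap_p(E;O)`. -/
theorem capPhiInf_le_capP
    (n : ℕ) (p q α A : ℝ) (a : En n → ℝ)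
    (hp : 1 < p) (hpq : p < q) (hα : 0 < α) (hα1 : α ≤ 1)
    (ha : ∀ x, 0 ≤ a x) (hA : 0 ≤ A)
    (haH : ∀ x y, |a x - a y| ≤ A * dist x y ^ α)
    (E O : Set (En n)) (hE : IsCompact E) (hEO : E ⊆ O) (hO : IsOpen O) :
    capPhiInf a p q E O ≤ capP p E O := by
  classical
  haveI : Nonempty (Ioi (0:ℝ)) := ⟨⟨1, Set.mem_Ioi.mpr one_pos⟩⟩
  have hp0 : (0:ℝ) < p := lt_trans one_pos hp
  have hq0 : (0:ℝ) < q := lt_trans hp0 hpq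
  have haInf : 0 ≤ aInfOn a O :=
    Real.sInf_nonneg (by rintro x ⟨y, -, rfl⟩; exact ha y)
  have hconta : Continuous a := by
    rw [Metric.continuous_iff]
    intro x ε hε
    refine ⟨(ε / 2 / (A + 1)) ^ α⁻¹, Real.rpow_pos_of_pos (by positivity) _, fun y hy => ?_⟩
    have h1 : dist (a y) (a x) ≤ A * dist y x ^ α := by
      rw [Real.dist_eq]; exact haH y x
    have h2 : dist y x ^ α ≤ ((ε / 2 / (A + 1)) ^ α⁻¹) ^ α :=
      Real.rpow_le_rpow dist_nonneg hy.le hα.le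
    rw [Real.rpow_inv_rpow (by positivity) hα.ne'] at h2
    have hd : 0 ≤ dist y x ^ α := Real.rpow_nonneg dist_nonneg α
    have h3 : A * dist y x ^ α ≤ (A + 1) * (ε / 2 / (A + 1)) := by nlinarith
    have h4 : (A + 1) * (ε / 2 / (A + 1)) = ε / 2 := by field_simp
    calc dist (a y) (a x) ≤ A * dist y x ^ α := h1
      _ ≤ (A + 1) * (ε / 2 / (A + 1)) := h3
      _ = ε / 2 := h4
      _ < ε := by linarith
  by_cases hadm : (Adm E O 1).Nonempty
  · rw [capP]
    refine le_csInf (hadm.image _) ?_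
    rintro _ ⟨u, hu, rfl⟩
    show capPhiInf a p q E O ≤ ∫ x in O, gnorm u x ^ p
    set g := gnorm u with hgdef
    have hgm : Measurable g := (measurable_fderiv ℝ u).norm
    have hgnn : ∀ x, 0 ≤ g x := fun x => norm_nonneg _
    have hm1 : Measurable (fun x => g x ^ p) :=
      (Real.continuous_rpow_const hp0.le).measurable.comp hgm
    have hm2 : Measurable (fun x => a x * g x ^ q) :=
      hconta.measurable.mul ((Real.continuous_rpow_const hq0.le).measurable.comp hgm)
    have hIp0 : 0 ≤ ∫ x in O, g x ^ p :=
      integral_nonneg fun x => Real.rpow_nonneg (hgnn x) p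
    have hD : ∀ t : ℝ, 0 < t → 0 < t ^ p + aInfOn a O * t ^ q := by
      intro t ht
      have h1 : 0 < t ^ p := Real.rpow_pos_of_pos ht p
      have h2 : 0 ≤ aInfOn a O * t ^ q :=
        mul_nonneg haInf (Real.rpow_nonneg ht.le q)
      linarith
    have hlevel_le : ∀ t : ℝ, 0 < t →
        capPhiInf a p q E O ≤
          ∫ x in O, ((t * g x) ^ p + a x * (t * g x) ^ q) /
            (t ^ p + aInfOn a O * t ^ q) := by
      intro t ht
      have hv : (fun x => t * u x) ∈ Adm E O t := by
        have h := mul_mem_Adm' t ht hu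
        rwa [mul_one] at h
      have hbdd : BddBelow (Set.range fun s : Ioi (0:ℝ) => capPhiLevel a p q (s:ℝ) E O) := by
        refine ⟨0, ?_⟩
        rintro _ ⟨s, rfl⟩
        apply Real.sInf_nonneg
        rintro _ ⟨v, -, rfl⟩
        refine integral_nonneg fun x => div_nonneg ?_ ?_
        · have h1 := ha x
          have h2 := norm_nonneg (fderiv ℝ v x)
          unfold phi gnorm
          positivity
        · exact (hD s s.2).le
      have step1 : capPhiInf a p q E O ≤ capPhiLevel a p q t E O :=
        ciInf_le hbdd ⟨t, ht⟩
      have hbdd2 : BddBelow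
          ((fun v => ∫ x in O, phi a p q x (gnorm v x) / phiMinus a p q O t) '' Adm E O t) := by
        refine ⟨0, ?_⟩
        rintro _ ⟨v, -, rfl⟩
        refine integral_nonneg fun x => div_nonneg ?_ ?_
        · have h1 := ha x
          have h2 := norm_nonneg (fderiv ℝ v x)
          unfold phi gnorm
          positivity
        · exact (hD t ht).le
      have step2 : capPhiLevel a p q t E O ≤
          ∫ x in O, phi a p q x (gnorm (fun y => t * u y) x) / phiMinus a p q O t :=
        csInf_le hbdd2 ⟨_, hv, rfl⟩
      have heq : (fun x => phi a p q x (gnorm (fun y => t * u y) x) / phiMinus a p q O t)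
          = fun x => ((t * g x) ^ p + a x * (t * g x) ^ q) /
              (t ^ p + aInfOn a O * t ^ q) := by
        funext x
        rw [phi, phiMinus, gnorm_const_mul' u ht.ne' x, abs_of_pos ht, hgdef]
      calc capPhiInf a p q E O ≤ capPhiLevel a p q t E O := step1
        _ ≤ _ := step2
        _ = _ := by rw [heq]
    have hrep : ∀ t : ℝ, 0 < t → ∀ x,
        ((t * g x) ^ p + a x * (t * g x) ^ q) / (t ^ p + aInfOn a O * t ^ q)
        = (t ^ p / (t ^ p + aInfOn a O * t ^ q)) * g x ^ p
          + (t ^ q / (t ^ p + aInfOn a O * t ^ q)) * (a x * g x ^ q) := by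
      intro t ht x
      rw [Real.mul_rpow ht.le (hgnn x), Real.mul_rpow ht.le (hgnn x)]
      ring
    by_cases hint : Integrable (fun x => g x ^ p) (volume.restrict O)
        ∧ Integrable (fun x => a x * g x ^ q) (volume.restrict O)
    · obtain ⟨hi1, hi2⟩ := hint
      set C := ∫ x in O, a x * g x ^ q with hCdef
      have hC0 : 0 ≤ C := integral_nonneg fun x =>
        mul_nonneg (ha x) (Real.rpow_nonneg (hgnn x) q)
      refine le_of_forall_pos_le_add fun ε hε => ?_
      set t : ℝ := (ε / (C + 1)) ^ (q - p)⁻¹ with htdef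
      have ht : 0 < t := Real.rpow_pos_of_pos (by positivity) _
      have htq : t ^ (q - p) = ε / (C + 1) :=
        Real.rpow_inv_rpow (by positivity) (sub_ne_zero.mpr hpq.ne')
      have hI : (∫ x in O, ((t * g x) ^ p + a x * (t * g x) ^ q) /
            (t ^ p + aInfOn a O * t ^ q))
          = (t ^ p / (t ^ p + aInfOn a O * t ^ q)) * (∫ x in O, g x ^ p)
            + (t ^ q / (t ^ p + aInfOn a O * t ^ q)) * C := by
        simp_rw [hrep t ht]
        rw [integral_add (hi1.const_mul _) (hi2.const_mul _),
            integral_const_mul, integral_const_mul]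
      have hb1 : t ^ p / (t ^ p + aInfOn a O * t ^ q) ≤ 1 := by
        rw [div_le_one (hD t ht)]
        nlinarith [mul_nonneg haInf (Real.rpow_nonneg ht.le q)]
      have hb2 : t ^ q / (t ^ p + aInfOn a O * t ^ q) ≤ t ^ (q - p) := by
        rw [div_le_iff₀ (hD t ht)]
        have h1 : t ^ (q - p) * t ^ p = t ^ q := by
          rw [← Real.rpow_add ht]; ring_nf
        nlinarith [mul_nonneg (Real.rpow_nonneg ht.le (q - p))
          (mul_nonneg haInf (Real.rpow_nonneg ht.le q))]
      have hεC : t ^ (q - p) * C ≤ ε := by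
        rw [htq, div_mul_eq_mul_div, div_le_iff₀ (by positivity : (0:ℝ) < C + 1)]
        nlinarith
      calc capPhiInf a p q E O ≤ _ := hlevel_le t ht
        _ = _ := hI
        _ ≤ 1 * (∫ x in O, g x ^ p) + t ^ (q - p) * C :=
            add_le_add (mul_le_mul_of_nonneg_right hb1 hIp0)
              (mul_le_mul_of_nonneg_right hb2 hC0)
        _ ≤ (∫ x in O, g x ^ p) + ε := by rw [one_mul]; linarith
    · have hnot : ¬ Integrable (fun x => (((1:ℝ) * g x) ^ p + a x * ((1:ℝ) * g x) ^ q)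
          / ((1:ℝ) ^ p + aInfOn a O * (1:ℝ) ^ q)) (volume.restrict O) := by
        intro hI
        apply hint
        have hDone : (0:ℝ) < (1:ℝ) ^ p + aInfOn a O * (1:ℝ) ^ q := hD 1 one_pos
        have hS : Integrable (fun x => g x ^ p + a x * g x ^ q) (volume.restrict O) := by
          have h2 := hI.const_mul ((1:ℝ) ^ p + aInfOn a O * (1:ℝ) ^ q)
          have h3 : (fun x => ((1:ℝ) ^ p + aInfOn a O * (1:ℝ) ^ q) *
              ((((1:ℝ) * g x) ^ p + a x * ((1:ℝ) * g x) ^ q) /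
                ((1:ℝ) ^ p + aInfOn a O * (1:ℝ) ^ q)))
              = fun x => g x ^ p + a x * g x ^ q := by
            funext x
            rw [one_mul, mul_comm, div_mul_cancel₀ _ hDone.ne']
          rwa [h3] at h2
        constructor
        · refine hS.mono' hm1.aestronglyMeasurable ?_
          filter_upwards with x
          rw [Real.norm_eq_abs, abs_of_nonneg (Real.rpow_nonneg (hgnn x) p)]
          nlinarith [mul_nonneg (ha x) (Real.rpow_nonneg (hgnn x) q)]
        · refine hS.mono' hm2.aestronglyMeasurable ?_
          filter_upwards with x
          rw [Real.norm_eq_abs,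
            abs_of_nonneg (mul_nonneg (ha x) (Real.rpow_nonneg (hgnn x) q))]
          nlinarith [Real.rpow_nonneg (hgnn x) p]
      have h := hlevel_le 1 one_pos
      rw [integral_undef hnot] at h
      linarith
  · have hAdmt : ∀ t : ℝ, 0 < t → Adm E O t = (∅ : Set (En n → ℝ)) := by
      intro t ht
      rw [Set.eq_empty_iff_forall_notMem]
      intro v hv
      have h1 := mul_mem_Adm' t⁻¹ (by positivity) hv
      rw [inv_mul_cancel₀ ht.ne'] at h1
      exact hadm ⟨_, h1⟩
    have h0 : capPhiInf a p q E O = 0 := by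
      have hc : ∀ s : Ioi (0:ℝ), capPhiLevel a p q (s:ℝ) E O = 0 := by
        intro s
        rw [capPhiLevel, capLevel, hAdmt s s.2]
        simp
      calc capPhiInf a p q E O = ⨅ s : Ioi (0:ℝ), (0:ℝ) := by
            rw [capPhiInf]
            exact iInf_congr hc
        _ = 0 := ciInf_const
    have hP : capP p E O = 0 := by
      rw [capP, Set.not_nonempty_iff_eq_empty.mp hadm]
      simp
    rw [h0, hP]
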